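/- For the external force b^i_k(x) x^k_0 + b^i_0(x) added to a geodesic-type dynamic equation with mass tensor m_{ik} = -g_{ik} and g_{0i} = 0, the relativization constraint g_{μν} σ^μ_λ ẋ^λ ẋ^ν = 0 with σ^0_0 = 0, σ^0_k = -g^{00} g_{kj} b^j_0, σ^j_k = b^j_k, σ^j_0 = b^j_0 holds for all ẋ if and only if g_{ik} b^i_j + g_{ij} b^i_k = 0 for all j, k (the velocity-dependent force is of Lorentz type). -/

import Mathlib

theorem key (m : ℕ)
    (g : Option (Fin m) → Option (Fin m) → ℝ)
    (hgsym : ∀ μ ν, g μ ν = g ν μ)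
    (hg0i : ∀ i, g none (some i) = 0)
    (hg00 : g none none ≠ 0)
    (b : Fin m → Fin m → ℝ) (b0 : Fin m → ℝ)
    (σ : Option (Fin m) → Option (Fin m) → ℝ)
    (hσ00 : σ none none = 0)
    (hσ0k : ∀ k, σ none (some k) =
      -(g none none)⁻¹ * ∑ j, g (some k) (some j) * b0 j)
    (hσj0 : ∀ j, σ (some j) none = b0 j)
    (hσjk : ∀ j k, σ (some j) (some k) = b j k)
    (v : Option (Fin m) → ℝ) :
      (∑ l, ∑ ν, (∑ μ, g μ ν * σ μ l) * v l * v ν)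
      = ∑ k, ∑ n, (∑ j, g (some j) (some n) * b j k) * v (some k) * v (some n) := by
  have hgi0 : ∀ i, g (some i) none = 0 := fun i => (hgsym _ _).trans (hg0i i)
  have h1 : ∀ x : Fin m, g none none * (-(g none none)⁻¹ *
      ∑ j, g (some x) (some j) * b0 j) = -∑ j, g (some x) (some j) * b0 j := by
    intro x; field_simp
  simp only [Fintype.sum_option, hσ00, hσ0k, hσj0, hσjk, hg0i, hgi0, mul_zero, zero_mul,
    add_zero, zero_add, Finset.sum_const_zero, h1]
  rw [Finset.sum_add_distrib]
  have hcancel : (∑ x : Fin m, (∑ j, g (some j) (some x) * b0 j) * v none * v (some x))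
      + ∑ x : Fin m, -(∑ j, g (some x) (some j) * b0 j) * v (some x) * v none = 0 := by
    rw [← Finset.sum_add_distrib]
    apply Finset.sum_eq_zero
    intro x _
    have hs : (∑ j, g (some j) (some x) * b0 j) = ∑ j, g (some x) (some j) * b0 j :=
      Finset.sum_congr rfl fun j _ => by rw [hgsym]
    rw [hs]; ring
  linarith

/- STATEMENT 18: With g_{0i} = 0, g_{00} ≠ 0 and the soldering form σ^0_0 = 0,
   σ^0_k = -g^{00} g_{kj} b^j_0, σ^j_k = b^j_k, σ^j_0 = b^j_0, the relativization
   constraint g_{μν} σ^μ_λ ẋ^λ ẋ^ν = 0 holds for all ẋ iff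
   g_{ik} b^k_j + g_{jk} b^k_i = 0 for all i, j (Lorentz-type force). -/
theorem stmt18 (m : ℕ)
    (g : Option (Fin m) → Option (Fin m) → ℝ)
    (hgsym : ∀ μ ν, g μ ν = g ν μ)
    (hg0i : ∀ i, g none (some i) = 0)
    (hg00 : g none none ≠ 0)
    (b : Fin m → Fin m → ℝ) (b0 : Fin m → ℝ)
    (σ : Option (Fin m) → Option (Fin m) → ℝ)
    (hσ00 : σ none none = 0)
    (hσ0k : ∀ k, σ none (some k) =
      -(g none none)⁻¹ * ∑ j, g (some k) (some j) * b0 j)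
    (hσj0 : ∀ j, σ (some j) none = b0 j)
    (hσjk : ∀ j k, σ (some j) (some k) = b j k) :
    (∀ v : Option (Fin m) → ℝ,
      ∑ l, ∑ ν, (∑ μ, g μ ν * σ μ l) * v l * v ν = 0) ↔
    (∀ i j, ∑ kk, g (some i) (some kk) * b kk j
      + ∑ kk, g (some j) (some kk) * b kk i = 0) := by
  set M : Fin m → Fin m → ℝ := fun k n => ∑ j, g (some j) (some n) * b j k with hMdef
  have hMeq : ∀ i j, (∑ kk, g (some i) (some kk) * b kk j) = M j i := by
    intro i j
    exact Finset.sum_congr rfl fun kk _ => by rw [hgsym]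
  constructor
  · intro h i j
    have hq : ∀ v : Option (Fin m) → ℝ,
        ∑ k, ∑ n, M k n * v (some k) * v (some n) = 0 := by
      intro v
      rw [← key m g hgsym hg0i hg00 b b0 σ hσ00 hσ0k hσj0 hσjk v]
      exact h v
    have hdiag : ∀ i : Fin m, M i i = 0 := by
      intro i
      have := hq (fun o => if o = some i then 1 else 0)
      simpa [Option.some.injEq, mul_ite, ite_mul, mul_one, mul_zero, zero_mul,
        Finset.sum_ite_eq', Finset.sum_ite_eq] using this
    have hpair := hq (fun o => (if o = some i then 1 else 0) + (if o = some j then 1 else 0))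
    simp only [Option.some.injEq, mul_add, add_mul, mul_ite, ite_mul, mul_one, mul_zero,
      zero_mul, one_mul, Finset.sum_add_distrib, Finset.sum_ite_eq', Finset.sum_ite_eq,
      Finset.mem_univ, if_true] at hpair
    rw [hMeq i j, hMeq j i]
    have hii := hdiag i
    have hjj := hdiag j
    linarith
  · intro h v
    rw [key m g hgsym hg0i hg00 b b0 σ hσ00 hσ0k hσj0 hσjk v]
    have hanti : ∀ k n : Fin m, M k n + M n k = 0 := by
      intro k n
      have := h n k
      rw [hMeq n k, hMeq k n] at this
      linarith
    have hswap : (∑ k, ∑ n, M k n * v (some k) * v (some n))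
        = ∑ k, ∑ n, M n k * v (some k) * v (some n) := by
      rw [Finset.sum_comm]
      exact Finset.sum_congr rfl fun k _ => Finset.sum_congr rfl fun n _ => by ring
    have hzero : (∑ k, ∑ n, M k n * v (some k) * v (some n))
        + ∑ k, ∑ n, M n k * v (some k) * v (some n) = 0 := by
      rw [← Finset.sum_add_distrib]
      apply Finset.sum_eq_zero
      intro k _
      rw [← Finset.sum_add_distrib]
      apply Finset.sum_eq_zero
      intro n _
      have hz : M n k = -M k n := by linarith [hanti k n]
      rw [hz]; ring
    linarith [hswap, hzero]
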